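/- Let L be a closed subspace of ℝ^n (with Euclidean structure), S ⊆ L nonempty closed convex, and suppose the metric projection proj_S is differentiable at y. Then for each i, the i-th diagonal entry of the Jacobian of proj_S at y is at most the i-th diagonal entry of the matrix of the orthogonal projection onto L: ∂(proj_S y)ᵢ/∂yᵢ ≤ (P_L)ᵢᵢ. -/

import Mathlib

open Filter Topology InnerProductSpace


/-- If S is a nonempty closed convex subset of a closed subspace
L of ℝⁿ and the metric projection onto S is differentiable at y, then each
diagonal Jacobian entry of proj_S at y is at most the corresponding diagonal
entry of the orthogonal projection matrix onto L. -/
theorem jacobian_diag_le_orthogonalProjection_diag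
    {n : ℕ} (L : Submodule ℝ (EuclideanSpace ℝ (Fin n)))
    (S : Set (EuclideanSpace ℝ (Fin n))) (hSL : S ⊆ (L : Set (EuclideanSpace ℝ (Fin n))))
    (hSc : Convex ℝ S) (hScl : IsClosed S) (hSne : S.Nonempty)
    (projS : EuclideanSpace ℝ (Fin n) → EuclideanSpace ℝ (Fin n))
    (hprojS : ∀ x, projS x ∈ S ∧ ∀ w ∈ S, ‖x - projS x‖ ≤ ‖x - w‖)
    (y : EuclideanSpace ℝ (Fin n))
    (D : EuclideanSpace ℝ (Fin n) →L[ℝ] EuclideanSpace ℝ (Fin n))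
    (hD : HasFDerivAt projS D y) (i : Fin n) :
    D (EuclideanSpace.single i 1) i
      ≤ (Submodule.orthogonalProjection L (EuclideanSpace.single i 1) : EuclideanSpace ℝ (Fin n)) i := by
  haveI := hSne.to_subtype
  set e : EuclideanSpace ℝ (Fin n) := EuclideanSpace.single i 1 with he
  set Pe : EuclideanSpace ℝ (Fin n) := (Submodule.orthogonalProjection L e : EuclideanSpace ℝ (Fin n)) with hPe
  -- variational inequality
  have hinf : ∀ x : EuclideanSpace ℝ (Fin n), ‖x - projS x‖ = ⨅ w : S, ‖x - w‖ := by
    intro x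
    refine le_antisymm (le_ciInf fun w => (hprojS x).2 w w.2) ?_
    have hbdd : BddBelow (Set.range fun w : S => ‖x - (w : EuclideanSpace ℝ (Fin n))‖) :=
      ⟨0, fun z hz => by obtain ⟨w, rfl⟩ := hz; exact norm_nonneg _⟩
    exact ciInf_le hbdd (⟨projS x, (hprojS x).1⟩ : S)
  have hvar : ∀ x : EuclideanSpace ℝ (Fin n), ∀ w ∈ S, ⟪x - projS x, w - projS x⟫_ℝ ≤ 0 := fun x =>
    (norm_eq_iInf_iff_real_inner_le_zero hSc (hprojS x).1).mp (hinf x)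
  -- key inequality: for t > 0, (projS (y + t•e) - projS y) i ≤ t * Pe i
  have key : ∀ t : ℝ, 0 < t → projS (y + t • e) i - projS y i ≤ t * Pe i := by
    intro t ht
    set a := projS (y + t • e) with ha
    set b := projS y with hb
    have h1 : ⟪(y + t • e) - a, b - a⟫_ℝ ≤ 0 := hvar _ b (hprojS y).1
    have h2 : ⟪y - b, a - b⟫_ℝ ≤ 0 := hvar _ a (hprojS (y + t • e)).1
    have hab : ‖a - b‖ ^ 2 ≤ t * ⟪e, a - b⟫_ℝ := by
      have hsum := add_nonpos h1 h2
      have h3 : (y + t • e - a : EuclideanSpace ℝ (Fin n)) = t • e + (y - b) + (b - a) := by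
        abel
      rw [h3, inner_add_left, inner_add_left, real_inner_smul_left] at hsum
      have h4 : ⟪y - b, a - b⟫_ℝ = -⟪y - b, b - a⟫_ℝ := by
        rw [← inner_neg_right]; congr 1; abel
      have h5 : ⟪b - a, b - a⟫_ℝ = ‖a - b‖ ^ 2 := by
        rw [real_inner_self_eq_norm_sq, show (b - a : EuclideanSpace ℝ (Fin n)) = -(a - b) by abel,
          norm_neg]
      have hba : ⟪e, b - a⟫_ℝ = -⟪e, a - b⟫_ℝ := by
        rw [← inner_neg_right]; congr 1; abel
      rw [h4, h5, hba] at hsum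
      nlinarith [hsum]
    -- a - b ∈ L
    have hmemL : a - b ∈ L := L.sub_mem (hSL (hprojS (y + t • e)).1) (hSL (hprojS y).1)
    have hinner : ⟪e, a - b⟫_ℝ = ⟪Pe, a - b⟫_ℝ := by
      have h0 : ⟪e - Pe, a - b⟫_ℝ = 0 := L.starProjection_inner_eq_zero e (a - b) hmemL
      rw [inner_sub_left] at h0
      linarith [h0]
    have hCS : ⟪Pe, a - b⟫_ℝ ≤ ‖Pe‖ * ‖a - b‖ := real_inner_le_norm _ _
    have hnorm : ‖a - b‖ ≤ t * ‖Pe‖ := by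
      rcases eq_or_lt_of_le (norm_nonneg (a - b)) with h0 | h0
      · rw [← h0]; positivity
      · have : ‖a - b‖ ^ 2 ≤ t * (‖Pe‖ * ‖a - b‖) := by
          calc ‖a - b‖ ^ 2 ≤ t * ⟪e, a - b⟫_ℝ := hab
            _ ≤ t * (‖Pe‖ * ‖a - b‖) := by rw [hinner]; exact mul_le_mul_of_nonneg_left hCS ht.le
        nlinarith
    have hPei : Pe i = ‖Pe‖ ^ 2 := by
      have h0 : ⟪e - Pe, Pe⟫_ℝ = 0 := L.starProjection_inner_eq_zero e Pe (Submodule.orthogonalProjection L e).2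
      rw [inner_sub_left, real_inner_self_eq_norm_sq] at h0
      have hei : ⟪e, Pe⟫_ℝ = Pe i := by
        rw [he, EuclideanSpace.inner_single_left]
        simp
      linarith
    have hcomp : a i - b i = ⟪e, a - b⟫_ℝ := by
      rw [he, EuclideanSpace.inner_single_left]
      simp
    calc a i - b i = ⟪e, a - b⟫_ℝ := hcomp
      _ = ⟪Pe, a - b⟫_ℝ := hinner
      _ ≤ ‖Pe‖ * ‖a - b‖ := hCS
      _ ≤ ‖Pe‖ * (t * ‖Pe‖) := mul_le_mul_of_nonneg_left hnorm (norm_nonneg _)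
      _ = t * (‖Pe‖ ^ 2) := by ring
      _ = t * Pe i := by rw [hPei]
  -- derivative along the curve
  have hcurve : HasDerivAt (fun t : ℝ => y + t • e) e 0 := by
    simpa using ((hasDerivAt_id (0 : ℝ)).smul_const e).const_add y
  have hD' : HasFDerivAt projS D (y + (0 : ℝ) • e) := by simpa using hD
  have hcomp : HasDerivAt (fun t : ℝ => projS (y + t • e)) (D e) 0 :=
    hD'.comp_hasDerivAt 0 hcurve
  have hcompi : HasDerivAt (fun t : ℝ => projS (y + t • e) i) (D e i) 0 := by
    have := (EuclideanSpace.proj (𝕜 := ℝ) i).hasFDerivAt.comp_hasDerivAt 0 hcomp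
    exact this
  have hslope : Tendsto (slope (fun t : ℝ => projS (y + t • e) i) 0) (𝓝[>] 0) (𝓝 (D e i)) :=
    (hasDerivAt_iff_tendsto_slope.mp hcompi).mono_left
      (nhdsWithin_mono 0 fun t ht => ne_of_gt ht)
  refine le_of_tendsto hslope ?_
  filter_upwards [self_mem_nhdsWithin] with t ht
  rw [slope_def_field]
  simp only [zero_smul, add_zero, sub_zero]
  rw [div_le_iff₀ ht]
  have := key t ht
  simp only [zero_smul, add_zero] at this ⊢
  linarith [this]
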